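/- The rational circle graph 𝒞_ℚ is vertex-transitive: for any two vertices u, v of 𝒞_ℚ there is an automorphism of 𝒞_ℚ mapping u to v. -/

import Mathlib

noncomputable section

/-- The unit circle in the complex plane. -/
def S1 : Set ℂ := {z : ℂ | ‖z‖ = 1}

/-- The closed segment in the plane spanned by an unordered pair of points. -/
def chordSegment : Sym2 ℂ → Set ℂ :=
  Sym2.lift ⟨fun a b => segment ℝ a b, fun a b => segment_symm ℝ a b⟩

/-- The rational points of the circle: the points `exp (2 π i q)` for `q : ℚ`. -/
def Q1 : Set ℂ := {z : ℂ | ∃ q : ℚ, z = Complex.exp (2 * Real.pi * Complex.I * q)}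

/-- A rational chord: an unordered pair of two distinct rational points of the circle. -/
def ChordQ : Type := {p : Sym2 ℂ // (∀ z ∈ p, z ∈ Q1) ∧ ¬ p.IsDiag}

/-- The rational circle graph: vertices are the rational chords, two distinct chords
being adjacent whenever their segments intersect. -/
def RationalCircleGraph : SimpleGraph ChordQ where
  Adj C D := C ≠ D ∧ (chordSegment C.1 ∩ chordSegment D.1).Nonempty
  symm := ⟨fun C D ⟨h1, h2⟩ => ⟨h1.symm, by rwa [Set.inter_comm]⟩⟩
  loopless := ⟨fun C h => h.1 rfl⟩

open Complex Real Set


/-- point on circle at angle `2πt`. -/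
def cir (t : ℝ) : ℂ := Complex.exp (2 * Real.pi * Complex.I * t)

lemma cir_eq (t : ℝ) : cir t = Complex.exp ((2 * Real.pi * t : ℝ) * Complex.I) := by
  unfold cir; congr 1; push_cast; ring

lemma cir_re (t : ℝ) : (cir t).re = Real.cos (2 * Real.pi * t) := by
  rw [cir_eq]; exact Complex.exp_ofReal_mul_I_re _

lemma cir_im (t : ℝ) : (cir t).im = Real.sin (2 * Real.pi * t) := by
  rw [cir_eq]; exact Complex.exp_ofReal_mul_I_im _

lemma cir_add (s t : ℝ) : cir (s + t) = cir s * cir t := by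
  unfold cir; rw [← Complex.exp_add]; congr 1; push_cast; ring

lemma cir_int (n : ℤ) : cir n = 1 := by
  rw [cir_eq]
  have : ((2 * Real.pi * n : ℝ) : ℂ) * Complex.I = (n : ℂ) * (2 * π * Complex.I) := by
    push_cast; ring
  rw [this, Complex.exp_int_mul_two_pi_mul_I]

lemma cir_add_int (t : ℝ) (n : ℤ) : cir (t + n) = cir t := by
  rw [cir_add, cir_int, mul_one]

lemma cir_fract (t : ℝ) : cir (Int.fract t) = cir t := by
  have : t = Int.fract t + (⌊t⌋ : ℤ) := by rw [add_comm, Int.floor_add_fract]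
  conv_rhs => rw [this]
  rw [cir_add_int]

lemma norm_cir (t : ℝ) : ‖cir t‖ = 1 := by rw [cir_eq]; exact Complex.norm_exp_ofReal_mul_I _

lemma cir_ne_zero (t : ℝ) : cir t ≠ 0 := by
  intro h; have := norm_cir t; rw [h] at this; simp at this

lemma mem_Q1_iff {z : ℂ} : z ∈ Q1 ↔ ∃ q : ℚ, z = cir q := Iff.rfl

/-- angle coordinate in `[0,1)`. -/
def ang (z : ℂ) : ℝ := Int.fract (Complex.arg z / (2 * Real.pi))

lemma ang_mem (z : ℂ) : ang z ∈ Set.Ico (0:ℝ) 1 := ⟨Int.fract_nonneg _, Int.fract_lt_one _⟩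

lemma ang_cir (t : ℝ) : ang (cir t) = Int.fract t := by
  have hπ := Real.pi_pos
  have key : ∀ s : ℝ, s ∈ Set.Ioc (-(1/2) : ℝ) (1/2) → Complex.arg (cir s) = 2 * π * s := by
    intro s hs
    have : cir s = Complex.cos (2*π*s : ℝ) + Complex.sin (2*π*s : ℝ) * Complex.I := by
      rw [cir_eq, Complex.exp_mul_I]
    rw [this]
    apply Complex.arg_cos_add_sin_mul_I
    constructor
    · nlinarith [hs.1]
    · nlinarith [hs.2]
  -- reduce to fract
  have h1 : cir t = cir (Int.fract t) := (cir_fract t).symm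
  set r := Int.fract t with hr
  have hr0 : 0 ≤ r := Int.fract_nonneg t
  have hr1 : r < 1 := Int.fract_lt_one t
  rw [h1]
  unfold ang
  by_cases hc : r ≤ 1/2
  · rw [key r ⟨by linarith, hc⟩]
    rw [mul_comm, mul_div_assoc, div_self (by positivity), mul_one]
    exact Int.fract_eq_self.2 ⟨hr0, hr1⟩
  · have h2 : cir r = cir (r - 1) := by
      have : r = (r - 1) + (1:ℤ) := by push_cast; ring
      conv_lhs => rw [this]
      rw [cir_add_int]
    rw [h2, key (r-1) ⟨by linarith, by linarith⟩]
    rw [mul_comm, mul_div_assoc, div_self (by positivity), mul_one]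
    have : Int.fract (r - 1) = Int.fract r := by
      have : r - 1 = r + (-1 : ℤ) := by push_cast; ring
      rw [this, Int.fract_add_intCast]
    rw [this, hr, Int.fract_fract]

lemma cir_ang {z : ℂ} (hz : z ∈ Q1) : cir (ang z) = z := by
  obtain ⟨q, rfl⟩ := hz
  show cir (ang (cir (q:ℝ))) = cir (q:ℝ)
  rw [ang_cir, cir_fract]

lemma ang_rat {z : ℂ} (hz : z ∈ Q1) : ∃ q : ℚ, (q : ℝ) = ang z := by
  obtain ⟨q, rfl⟩ := hz
  refine ⟨q - ⌊q⌋, ?_⟩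
  show ((q - ⌊q⌋ : ℚ) : ℝ) = ang (cir (q:ℝ))
  rw [ang_cir]
  push_cast
  rw [Int.fract]
  norm_num [Rat.floor_cast]


def det3 (a b c : ℂ) : ℝ := (b - a).re * (c - a).im - (b - a).im * (c - a).re

lemma det3_affine (a b c d : ℂ) (r s : ℝ) (h : r + s = 1) :
    det3 a b (r • c + s • d) = r * det3 a b c + s * det3 a b d := by
  simp only [det3, Complex.add_re, Complex.add_im, Complex.sub_re, Complex.sub_im,
    Complex.smul_re, Complex.smul_im, smul_eq_mul]
  linear_combination ((b.re - a.re) * a.im - (b.im - a.im) * a.re) * h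

lemma det3_self_left (a b : ℂ) : det3 a b a = 0 := by
  simp only [det3, Complex.sub_re, Complex.sub_im]; ring
lemma det3_self_right (a b : ℂ) : det3 a b b = 0 := by
  simp only [det3, Complex.sub_re, Complex.sub_im]; ring
lemma det3_swap (a b c : ℂ) : det3 b a c = - det3 a b c := by
  simp only [det3, Complex.sub_re, Complex.sub_im]; ring

lemma det3_of_segment {a b p : ℂ} (hp : p ∈ segment ℝ a b) : det3 a b p = 0 := by
  obtain ⟨r, s, hr, hs, hrs, rfl⟩ := hp
  rw [det3_affine a b a b r s hrs, det3_self_left, det3_self_right]; ring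

lemma disjoint_of_same_side {a b c d : ℂ} (hc : 0 < det3 a b c) (hd : 0 < det3 a b d) :
    segment ℝ a b ∩ segment ℝ c d = ∅ := by
  ext p
  simp only [Set.mem_inter_iff, Set.mem_empty_iff_false, iff_false, not_and]
  intro hab hcd
  obtain ⟨r, s, hr, hs, hrs, rfl⟩ := hcd
  have h1 : det3 a b (r • c + s • d) = r * det3 a b c + s * det3 a b d :=
    det3_affine a b c d r s hrs
  have h2 : det3 a b (r • c + s • d) = 0 := det3_of_segment hab
  have hsum : r * det3 a b c + s * det3 a b d = 0 := by linarith
  have hr0 : r * det3 a b c = 0 :=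
    le_antisymm (by nlinarith [mul_nonneg hs hd.le]) (mul_nonneg hr hc.le)
  have hs0 : s * det3 a b d = 0 := by linarith
  rcases mul_eq_zero.1 hr0 with h | h
  · rcases mul_eq_zero.1 hs0 with h' | h'
    · linarith
    · exact absurd h' (ne_of_gt hd)
  · exact absurd h (ne_of_gt hc)

lemma line_param {a b p : ℂ} (hab : a ≠ b) (h : det3 a b p = 0) :
    ∃ r : ℝ, p = (1 - r) • a + r • b := by
  have hw0 : b - a ≠ 0 := sub_ne_zero.2 (Ne.symm hab)
  have hD : (b-a).re * (b-a).re + (b-a).im * (b-a).im ≠ 0 := by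
    have := (Complex.normSq_pos.2 hw0).ne'
    rwa [Complex.normSq_apply] at this
  set r := ((p - a).re * (b-a).re + (p - a).im * (b-a).im) /
      ((b-a).re * (b-a).re + (b-a).im * (b-a).im) with hr
  have hdet : (b-a).re * (p - a).im - (b-a).im * (p - a).re = 0 := h
  refine ⟨r, ?_⟩
  have hre : r * (b-a).re = (p - a).re := by
    rw [hr, div_mul_eq_mul_div, div_eq_iff hD]
    linear_combination ((b-a).im) * hdet
  have him : r * (b-a).im = (p - a).im := by
    rw [hr, div_mul_eq_mul_div, div_eq_iff hD]
    linear_combination (-(b-a).re) * hdet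
  apply Complex.ext
  · simp only [Complex.add_re, Complex.smul_re, smul_eq_mul]
    simp only [Complex.sub_re] at hre
    linarith [hre]
  · simp only [Complex.add_im, Complex.smul_im, smul_eq_mul]
    simp only [Complex.sub_im] at him
    linarith [him]

lemma intersect_of_opposite {a b c d : ℂ} (hab : a ≠ b)
    (h1 : det3 a b c < 0) (h2 : 0 < det3 a b d)
    (h3 : det3 c d a * det3 c d b < 0) :
    (segment ℝ a b ∩ segment ℝ c d).Nonempty := by
  set Lc := det3 a b c
  set Ld := det3 a b d
  have hden : Lc - Ld < 0 := by linarith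
  have hden' : Lc - Ld ≠ 0 := ne_of_lt hden
  set τ := Lc / (Lc - Ld) with hτ
  have hτ0 : 0 < τ := div_pos_of_neg_of_neg h1 hden
  have hτ1 : τ < 1 := by
    rw [hτ, div_lt_one_of_neg hden]
    linarith
  set p := (1 - τ) • c + τ • d with hp
  have hpseg : p ∈ segment ℝ c d := ⟨1 - τ, τ, by linarith, by linarith, by ring, rfl⟩
  have hdet_p : det3 a b p = 0 := by
    rw [hp, det3_affine a b c d (1-τ) τ (by ring), hτ]
    show (1 - Lc/(Lc-Ld)) * Lc + Lc/(Lc-Ld) * Ld = 0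
    field_simp
    ring
  obtain ⟨r, hr⟩ := line_param hab hdet_p
  have hdet_cdp : det3 c d p = 0 := by
    rw [hp, det3_affine c d c d (1-τ) τ (by ring), det3_self_left, det3_self_right]; ring
  have heq : (1 - r) * det3 c d a + r * det3 c d b = 0 := by
    rw [← det3_affine c d a b (1-r) r (by ring), ← hr, hdet_cdp]
  set Ma := det3 c d a
  set Mb := det3 c d b
  have hr01 : 0 ≤ r ∧ r ≤ 1 := by
    rcases lt_trichotomy Ma 0 with hMa | hMa | hMa
    · have hMb : 0 < Mb := by nlinarith
      constructor <;> nlinarith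
    · rw [hMa] at h3; nlinarith
    · have hMb : Mb < 0 := by nlinarith
      constructor <;> nlinarith
  exact ⟨p, ⟨1 - r, r, by linarith [hr01.2], hr01.1, by ring, hr.symm⟩, hpseg⟩

lemma det3_cir (x y c : ℝ) :
    det3 (cir x) (cir y) (cir c) =
      4 * Real.sin (π*(y-x)) * Real.sin (π*(c-y)) * Real.sin (π*(c-x)) := by
  have h2 : ∀ t : ℝ, 2 * π * t = 2 * (π * t) := fun t => by ring
  have hs : ∀ a b : ℝ, π * (a - b) = π*a - π*b := fun a b => by ring
  unfold det3
  simp only [Complex.sub_re, Complex.sub_im, cir_re, cir_im, h2, hs,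
    Real.sin_two_mul, Real.cos_two_mul', Real.sin_sub]
  set sx := Real.sin (π*x); set cx := Real.cos (π*x)
  set sy := Real.sin (π*y); set cy := Real.cos (π*y)
  set sc := Real.sin (π*c); set cc := Real.cos (π*c)
  have px : sx^2 + cx^2 = 1 := Real.sin_sq_add_cos_sq _
  have py : sy^2 + cy^2 = 1 := Real.sin_sq_add_cos_sq _
  have pc : sc^2 + cc^2 = 1 := Real.sin_sq_add_cos_sq _
  linear_combination (2*sc*cc - 2*sy*cy - 4*cy^2*sc*cc + 4*sy*cy*cc^2) * px +
    (-2*sc*cc + 2*sx*cx + 4*cx^2*sc*cc - 4*sx*cx*cc^2) * py +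
    (2*sy*cy - 2*sx*cx - 4*cx^2*sy*cy + 4*sx*cx*cy^2) * pc

section Star
open Real

lemma sin_pi_mul_pos {d : ℝ} (h1 : -1 < d) (h2 : d < 1) (h0 : d ≠ 0) :
    0 < Real.sin (π*d) * d := by
  have hπ := Real.pi_pos
  rcases h0.lt_or_gt with h | h
  · have hp : 0 < Real.sin (π*(-d)) :=
      Real.sin_pos_of_pos_of_lt_pi (by nlinarith) (by nlinarith)
    have e : Real.sin (π*d) = -Real.sin (π*(-d)) := by
      rw [← Real.sin_neg]; ring_nf
    rw [e]
    have := mul_pos hp (neg_pos.2 h)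
    nlinarith
  · exact mul_pos (Real.sin_pos_of_pos_of_lt_pi (by nlinarith) (by nlinarith)) h

lemma cir_injOn {x y : ℝ} (hx : x ∈ Set.Ico (0:ℝ) 1) (hy : y ∈ Set.Ico (0:ℝ) 1)
    (h : cir x = cir y) : x = y := by
  have := congrArg ang h
  rwa [ang_cir, ang_cir, Int.fract_eq_self.2 ⟨hx.1, hx.2⟩, Int.fract_eq_self.2 ⟨hy.1, hy.2⟩] at this

/-- The master geometric criterion. -/
lemma star {x y s t : ℝ} (hx : x ∈ Set.Ico (0:ℝ) 1) (hy : y ∈ Set.Ico (0:ℝ) 1)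
    (hs : s ∈ Set.Ico (0:ℝ) 1) (ht : t ∈ Set.Ico (0:ℝ) 1)
    (hxy : x ≠ y) (hst : s ≠ t) :
    (segment ℝ (cir x) (cir y) ∩ segment ℝ (cir s) (cir t)).Nonempty ↔
      (s-x)*(s-y)*(t-x)*(t-y) ≤ 0 := by
  obtain ⟨hx0, hx1⟩ := hx; obtain ⟨hy0, hy1⟩ := hy
  obtain ⟨hs0, hs1⟩ := hs; obtain ⟨ht0, ht1⟩ := ht
  have hab : cir x ≠ cir y := fun h => hxy (cir_injOn ⟨hx0,hx1⟩ ⟨hy0,hy1⟩ h)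
  have hSxy : 0 < Real.sin (π*(y-x)) * (y-x) :=
    sin_pi_mul_pos (by linarith) (by linarith) (sub_ne_zero.2 (Ne.symm hxy))
  have hS0 : Real.sin (π*(y-x)) ≠ 0 := by
    intro h; rw [h, zero_mul] at hSxy; exact lt_irrefl 0 hSxy
  have hTst : 0 < Real.sin (π*(t-s)) * (t-s) :=
    sin_pi_mul_pos (by linarith) (by linarith) (sub_ne_zero.2 (Ne.symm hst))
  have hT0 : Real.sin (π*(t-s)) ≠ 0 := by
    intro h; rw [h, zero_mul] at hTst; exact lt_irrefl 0 hTst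
  constructor
  · -- intersection → P ≤ 0
    intro hne
    by_contra hP
    push_neg at hP
    have hd1 : s - x ≠ 0 := by intro h; rw [h] at hP; simp at hP
    have hd2 : s - y ≠ 0 := by intro h; rw [h] at hP; simp at hP
    have hd3 : t - x ≠ 0 := by intro h; rw [h] at hP; simp at hP
    have hd4 : t - y ≠ 0 := by intro h; rw [h] at hP; simp at hP
    have h1 := sin_pi_mul_pos (by linarith) (by linarith) hd1
    have h2 := sin_pi_mul_pos (by linarith) (by linarith) hd2
    have h3 := sin_pi_mul_pos (by linarith) (by linarith) hd3
    have h4 := sin_pi_mul_pos (by linarith) (by linarith) hd4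
    have hQP : 0 < (Real.sin (π*(s-x)) * Real.sin (π*(s-y)) * Real.sin (π*(t-x)) *
        Real.sin (π*(t-y))) * ((s-x)*(s-y)*(t-x)*(t-y)) := by
      have h := mul_pos (mul_pos h1 h2) (mul_pos h3 h4)
      rw [show (Real.sin (π*(s-x)) * (s-x)) * (Real.sin (π*(s-y)) * (s-y)) *
          ((Real.sin (π*(t-x)) * (t-x)) * (Real.sin (π*(t-y)) * (t-y))) =
          (Real.sin (π*(s-x)) * Real.sin (π*(s-y)) * Real.sin (π*(t-x)) *
          Real.sin (π*(t-y))) * ((s-x)*(s-y)*(t-x)*(t-y)) from by ring] at h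
      exact h
    have hQ : 0 < Real.sin (π*(s-x)) * Real.sin (π*(s-y)) * Real.sin (π*(t-x)) *
        Real.sin (π*(t-y)) := by
      by_contra hq
      push_neg at hq
      linarith [mul_nonpos_iff.2 (Or.inr ⟨hq, hP.le⟩)]
    have hdd : 0 < det3 (cir x) (cir y) (cir s) * det3 (cir x) (cir y) (cir t) := by
      rw [det3_cir, det3_cir]
      linarith [mul_pos (mul_self_pos.mpr hS0) hQ]
    rcases mul_pos_iff.1 hdd with ⟨ha, hb⟩ | ⟨ha, hb⟩
    · have := disjoint_of_same_side ha hb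
      rw [this] at hne; exact Set.not_nonempty_empty hne
    · have ha' : 0 < det3 (cir y) (cir x) (cir s) := by rw [det3_swap]; linarith
      have hb' : 0 < det3 (cir y) (cir x) (cir t) := by rw [det3_swap]; linarith
      have hdisj := disjoint_of_same_side ha' hb'
      rw [segment_symm ℝ (cir y) (cir x)] at hdisj
      rw [hdisj] at hne; exact Set.not_nonempty_empty hne
  · -- P ≤ 0 → intersection
    intro hP
    rcases eq_or_lt_of_le hP with hP0 | hPneg
    · rcases mul_eq_zero.1 hP0 with h | h
      · rcases mul_eq_zero.1 h with h' | h'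
        · rcases mul_eq_zero.1 h' with h'' | h''
          · have hsx : s = x := by linarith [sub_eq_zero.1 h'']
            exact ⟨cir x, left_mem_segment ℝ _ _, by rw [← hsx]; exact left_mem_segment ℝ _ _⟩
          · have hsy : s = y := by linarith [sub_eq_zero.1 h'']
            exact ⟨cir y, right_mem_segment ℝ _ _, by rw [← hsy]; exact left_mem_segment ℝ _ _⟩
        · have htx : t = x := by linarith [sub_eq_zero.1 h']
          exact ⟨cir x, left_mem_segment ℝ _ _, by rw [← htx]; exact right_mem_segment ℝ _ _⟩
      · have hty : t = y := by linarith [sub_eq_zero.1 h]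
        exact ⟨cir y, right_mem_segment ℝ _ _, by rw [← hty]; exact right_mem_segment ℝ _ _⟩
    · have hd1 : s - x ≠ 0 := by intro h; rw [h] at hPneg; simp at hPneg
      have hd2 : s - y ≠ 0 := by intro h; rw [h] at hPneg; simp at hPneg
      have hd3 : t - x ≠ 0 := by intro h; rw [h] at hPneg; simp at hPneg
      have hd4 : t - y ≠ 0 := by intro h; rw [h] at hPneg; simp at hPneg
      have h1 := sin_pi_mul_pos (show (-1:ℝ) < s - x by linarith) (by linarith) hd1
      have h2 := sin_pi_mul_pos (show (-1:ℝ) < s - y by linarith) (by linarith) hd2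
      have h3 := sin_pi_mul_pos (show (-1:ℝ) < t - x by linarith) (by linarith) hd3
      have h4 := sin_pi_mul_pos (show (-1:ℝ) < t - y by linarith) (by linarith) hd4
      have hQP : 0 < (Real.sin (π*(s-x)) * Real.sin (π*(s-y)) * Real.sin (π*(t-x)) *
          Real.sin (π*(t-y))) * ((s-x)*(s-y)*(t-x)*(t-y)) := by
        have h := mul_pos (mul_pos h1 h2) (mul_pos h3 h4)
        rw [show (Real.sin (π*(s-x)) * (s-x)) * (Real.sin (π*(s-y)) * (s-y)) *
            ((Real.sin (π*(t-x)) * (t-x)) * (Real.sin (π*(t-y)) * (t-y))) =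
            (Real.sin (π*(s-x)) * Real.sin (π*(s-y)) * Real.sin (π*(t-x)) *
            Real.sin (π*(t-y))) * ((s-x)*(s-y)*(t-x)*(t-y)) from by ring] at h
        exact h
      have hQ : Real.sin (π*(s-x)) * Real.sin (π*(s-y)) * Real.sin (π*(t-x)) *
          Real.sin (π*(t-y)) < 0 := by
        by_contra hq
        push_neg at hq
        linarith [mul_nonpos_iff.2 (Or.inl ⟨hq, hPneg.le⟩)]
      have hdd : det3 (cir x) (cir y) (cir s) * det3 (cir x) (cir y) (cir t) < 0 := by
        rw [det3_cir, det3_cir]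
        linarith [mul_neg_of_pos_of_neg (mul_self_pos.mpr hS0) hQ]
      have n1 : Real.sin (π*(x-s)) = -Real.sin (π*(s-x)) := by rw [← Real.sin_neg]; ring_nf
      have n2 : Real.sin (π*(x-t)) = -Real.sin (π*(t-x)) := by rw [← Real.sin_neg]; ring_nf
      have n3 : Real.sin (π*(y-s)) = -Real.sin (π*(s-y)) := by rw [← Real.sin_neg]; ring_nf
      have n4 : Real.sin (π*(y-t)) = -Real.sin (π*(t-y)) := by rw [← Real.sin_neg]; ring_nf
      have hdd2 : det3 (cir s) (cir t) (cir x) * det3 (cir s) (cir t) (cir y) < 0 := by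
        rw [det3_cir, det3_cir, n1, n2, n3, n4]
        linarith [mul_neg_of_pos_of_neg (mul_self_pos.mpr hT0) hQ]
      rcases mul_neg_iff.1 hdd with ⟨ha, hb⟩ | ⟨ha, hb⟩
      · -- det3 at s pos, at t neg : use chord (t,s)
        have hdd2' : det3 (cir t) (cir s) (cir x) * det3 (cir t) (cir s) (cir y) < 0 := by
          rw [det3_swap (cir s) (cir t) (cir x), det3_swap (cir s) (cir t) (cir y)]
          linarith [hdd2]
        obtain ⟨p, hp1, hp2⟩ := intersect_of_opposite hab hb ha hdd2'
        exact ⟨p, hp1, (segment_symm ℝ (cir t) (cir s)) ▸ hp2⟩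
      · exact intersect_of_opposite hab ha hb hdd2
end Star

section PL

/-- piecewise linear increasing self-map of `[0,1)` sending `0 ↦ 0` and `a ↦ b`. -/
def pl (a b r : ℝ) : ℝ := if r ≤ a then r * (b/a) else b + (r - a) * ((1-b)/(1-a))

lemma pl_zero {a b : ℝ} (ha0 : 0 < a) : pl a b 0 = 0 := by
  unfold pl; rw [if_pos ha0.le]; ring

lemma pl_a {a b : ℝ} (ha0 : 0 < a) : pl a b a = b := by
  unfold pl; rw [if_pos le_rfl]; field_simp

lemma pl_mono {a b : ℝ} (ha0 : 0 < a) (ha1 : a < 1) (hb0 : 0 < b) (hb1 : b < 1) :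
    StrictMono (pl a b) := by
  intro r1 r2 h
  unfold pl
  have hba : 0 < b/a := div_pos hb0 ha0
  have h1ba : 0 < (1-b)/(1-a) := div_pos (by linarith) (by linarith)
  have key : a * (b/a) = b := by field_simp
  split_ifs with h1 h2 h2
  · exact mul_lt_mul_of_pos_right h hba
  · push_neg at h2
    have e1 : r1 * (b/a) ≤ b := by
      have e2 := mul_le_mul_of_nonneg_right h1 hba.le
      calc r1 * (b/a) ≤ a * (b/a) := e2
        _ = b := key
    nlinarith
  · linarith
  · push_neg at h1
    have := mul_lt_mul_of_pos_right (show r1 - a < r2 - a by linarith) h1ba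
    linarith

lemma pl_inv {a b : ℝ} (ha0 : 0 < a) (ha1 : a < 1) (hb0 : 0 < b) (hb1 : b < 1)
    (r : ℝ) : pl b a (pl a b r) = r := by
  unfold pl
  have hba : 0 < b/a := div_pos hb0 ha0
  have key : a * (b/a) = b := by field_simp
  split_ifs with h1 h2 h2
  · field_simp
  · exfalso
    push_neg at h2
    have : r * (b/a) ≤ a * (b/a) := mul_le_mul_of_nonneg_right h1 hba.le
    rw [key] at this; linarith
  · exfalso
    push_neg at h1
    have : 0 < (r - a) * ((1-b)/(1-a)) :=
      mul_pos (by linarith) (div_pos (by linarith) (by linarith))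
    linarith
  · have hne : (1:ℝ) - b ≠ 0 := by linarith
    have hne' : (1:ℝ) - a ≠ 0 := by linarith
    field_simp
    ring

lemma pl_mem_Ico {a b : ℝ} (ha0 : 0 < a) (ha1 : a < 1) (hb0 : 0 < b) (hb1 : b < 1)
    {r : ℝ} (hr : r ∈ Set.Ico (0:ℝ) 1) : pl a b r ∈ Set.Ico (0:ℝ) 1 := by
  obtain ⟨hr0, hr1⟩ := hr
  have key : a * (b/a) = b := by field_simp
  have key2 : (1-a) * ((1-b)/(1-a)) = 1 - b := by
    have hne' : (1:ℝ) - a ≠ 0 := by linarith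
    field_simp
  constructor
  · rw [← pl_zero (b := b) ha0]
    rcases eq_or_lt_of_le hr0 with h | h
    · rw [← h]
    · exact (pl_mono ha0 ha1 hb0 hb1 h).le
  · unfold pl
    have hba : 0 < b/a := div_pos hb0 ha0
    split_ifs with h1
    · have : r * (b/a) ≤ a * (b/a) := mul_le_mul_of_nonneg_right h1 hba.le
      rw [key] at this; linarith
    · push_neg at h1
      have : (r - a) * ((1-b)/(1-a)) < (1 - a) * ((1-b)/(1-a)) :=
        mul_lt_mul_of_pos_right (by linarith) (div_pos (by linarith) (by linarith))
      rw [key2] at this; linarith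

lemma pl_rat (p q r : ℚ) :
    ∃ r' : ℚ, pl (p:ℝ) (q:ℝ) (r:ℝ) = (r' : ℝ) := by
  unfold pl
  split_ifs with h
  · exact ⟨r * (q/p), by push_cast; ring⟩
  · exact ⟨q + (r - p) * ((1-q)/(1-p)), by push_cast; ring⟩

end PL

section Graph
open scoped Classical

lemma chordSegment_mk (a b : ℂ) : chordSegment s(a, b) = segment ℝ a b := rfl

lemma prod_sign_iff {f : ℝ → ℝ} (hf : StrictMono f) (x y s t : ℝ) :
    (f s - f x)*(f s - f y)*(f t - f x)*(f t - f y) ≤ 0 ↔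
      (s-x)*(s-y)*(t-x)*(t-y) ≤ 0 := by
  have k1 : ∀ u v : ℝ, 0 ≤ (f u - f v) * (u - v) := by
    intro u v
    rcases lt_trichotomy u v with h | h | h
    · have := hf h
      nlinarith
    · rw [h]; simp
    · have := hf h
      nlinarith
  have hnn : 0 ≤ ((f s - f x)*(f s - f y)*(f t - f x)*(f t - f y)) *
      ((s-x)*(s-y)*(t-x)*(t-y)) := by
    have m := mul_nonneg (mul_nonneg (k1 s x) (k1 s y)) (mul_nonneg (k1 t x) (k1 t y))
    rw [show (f s - f x) * (s - x) * ((f s - f y) * (s - y)) *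
        ((f t - f x) * (t - x) * ((f t - f y) * (t - y))) =
        ((f s - f x)*(f s - f y)*(f t - f x)*(f t - f y)) *
        ((s-x)*(s-y)*(t-x)*(t-y)) from by ring] at m
    exact m
  have hz : (s-x)*(s-y)*(t-x)*(t-y) = 0 ↔
      (f s - f x)*(f s - f y)*(f t - f x)*(f t - f y) = 0 := by
    simp only [mul_eq_zero, sub_eq_zero]
    simp [hf.injective.eq_iff]
  constructor
  · intro h
    rcases eq_or_lt_of_le h with h0 | hlt
    · exact le_of_eq (hz.2 h0)
    · by_contra hge
      push_neg at hge
      have := mul_neg_of_neg_of_pos hlt hge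
      linarith
  · intro h
    rcases eq_or_lt_of_le h with h0 | hlt
    · exact le_of_eq (hz.1 h0)
    · by_contra hge
      push_neg at hge
      have := mul_neg_of_pos_of_neg hge hlt
      linarith

/-- lift a `Q1`-preserving bijection of the plane to the chords -/
def chordEquiv (f : ℂ ≃ ℂ) (hf : ∀ z, z ∈ Q1 ↔ f z ∈ Q1) : ChordQ ≃ ChordQ where
  toFun C := ⟨Sym2.map f C.1,
    fun z hz => by
      rw [Sym2.mem_map] at hz
      obtain ⟨w, hw, rfl⟩ := hz
      exact (hf w).1 (C.2.1 w hw),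
    fun h => C.2.2 ((Sym2.isDiag_map f.injective).1 h)⟩
  invFun C := ⟨Sym2.map f.symm C.1,
    fun z hz => by
      rw [Sym2.mem_map] at hz
      obtain ⟨w, hw, rfl⟩ := hz
      have := C.2.1 w hw
      exact (hf (f.symm w)).2 (by rwa [Equiv.apply_symm_apply]),
    fun h => C.2.2 ((Sym2.isDiag_map f.symm.injective).1 h)⟩
  left_inv C := Subtype.ext (by
    simp only [Sym2.map_map]
    have : (⇑f.symm ∘ ⇑f) = id := by ext z; simp
    rw [this, Sym2.map_id, id_eq])
  right_inv C := Subtype.ext (by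
    simp only [Sym2.map_map]
    have : (⇑f ∘ ⇑f.symm) = id := by ext z; simp
    rw [this, Sym2.map_id, id_eq])

lemma chordEquiv_apply (f : ℂ ≃ ℂ) (hf : ∀ z, z ∈ Q1 ↔ f z ∈ Q1) (C : ChordQ) :
    (chordEquiv f hf C).1 = Sym2.map f C.1 := rfl

/-- build a graph automorphism from a point bijection -/
def graphIso (f : ℂ ≃ ℂ) (hf : ∀ z, z ∈ Q1 ↔ f z ∈ Q1)
    (hseg : ∀ C D : ChordQ,
      (chordSegment (Sym2.map f C.1) ∩ chordSegment (Sym2.map f D.1)).Nonempty ↔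
      (chordSegment C.1 ∩ chordSegment D.1).Nonempty) :
    RationalCircleGraph ≃g RationalCircleGraph where
  toEquiv := chordEquiv f hf
  map_rel_iff' := by
    intro C D
    show (_ ≠ _ ∧ _) ↔ (_ ≠ _ ∧ _)
    constructor
    · rintro ⟨h1, h2⟩
      exact ⟨fun e => h1 (congrArg _ e), (hseg C D).1 h2⟩
    · rintro ⟨h1, h2⟩
      exact ⟨fun e => h1 ((chordEquiv f hf).injective e), (hseg C D).2 h2⟩

lemma graphIso_apply (f : ℂ ≃ ℂ) (hf) (hseg) (C : ChordQ) :
    ((graphIso f hf hseg) C).1 = Sym2.map f C.1 := rfl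
end Graph

section Rot
open Complex

lemma cir_zero : cir 0 = 1 := by simp [cir]

lemma cir_ratCast (q : ℚ) : cir (q:ℝ) = Complex.exp (2 * Real.pi * Complex.I * q) := by
  unfold cir; norm_cast

lemma mem_Q1_iff' {z : ℂ} : z ∈ Q1 ↔ ∃ q : ℚ, z = cir (q:ℝ) :=
  exists_congr fun q => by rw [cir_ratCast]

lemma cir_rat_mem_Q1 (q : ℚ) : cir (q:ℝ) ∈ Q1 := mem_Q1_iff'.2 ⟨q, rfl⟩

/-- rotation by rational angle -/
def rotEquiv (c : ℚ) : ℂ ≃ ℂ where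
  toFun z := cir (c:ℝ) * z
  invFun z := cir (-(c:ℝ)) * z
  left_inv z := by
    show cir (-(c:ℝ)) * (cir (c:ℝ) * z) = z
    rw [← mul_assoc, ← cir_add]; simp [cir_zero]
  right_inv z := by
    show cir (c:ℝ) * (cir (-(c:ℝ)) * z) = z
    rw [← mul_assoc, ← cir_add]; simp [cir_zero]

lemma rotEquiv_apply (c : ℚ) (z : ℂ) : rotEquiv c z = cir (c:ℝ) * z := rfl

lemma rot_hf (c : ℚ) : ∀ z, z ∈ Q1 ↔ rotEquiv c z ∈ Q1 := by
  intro z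
  rw [mem_Q1_iff', mem_Q1_iff']
  constructor
  · rintro ⟨q, rfl⟩
    refine ⟨c + q, ?_⟩
    rw [rotEquiv_apply, ← cir_add]
    push_cast
    ring_nf
  · rintro ⟨q, hq⟩
    refine ⟨-c + q, ?_⟩
    have : z = cir (-(c:ℝ)) * cir (q:ℝ) := by
      rw [← hq, rotEquiv_apply, ← mul_assoc, ← cir_add]
      simp [cir_zero]
    rw [this, ← cir_add]
    push_cast
    ring_nf

/-- multiplication by a complex number as a real-affine map -/
def mulAff (w : ℂ) : ℂ →ᵃ[ℝ] ℂ :=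
  LinearMap.toAffineMap
    { toFun := fun z => w * z
      map_add' := fun x y => mul_add w x y
      map_smul' := fun r z => by simp [Complex.real_smul]; ring }

lemma segment_mul (w a b : ℂ) : segment ℝ (w*a) (w*b) = (fun z => w * z) '' segment ℝ a b :=
  (image_segment ℝ (mulAff w) a b).symm

lemma rot_hseg (c : ℚ) : ∀ C D : ChordQ,
    (chordSegment (Sym2.map (rotEquiv c) C.1) ∩ chordSegment (Sym2.map (rotEquiv c) D.1)).Nonempty ↔
    (chordSegment C.1 ∩ chordSegment D.1).Nonempty := by
  intro C D
  obtain ⟨p, hp⟩ := C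
  obtain ⟨q, hq⟩ := D
  induction p using Sym2.ind with
  | _ a b =>
  induction q using Sym2.ind with
  | _ a' b' =>
  simp only [Sym2.map_pair_eq, chordSegment_mk, rotEquiv_apply]
  rw [segment_mul, segment_mul, ← Set.image_inter (mul_right_injective₀ (cir_ne_zero _)),
    Set.image_nonempty]
end Rot

section Sig
open scoped Classical
open Complex

/-- the underlying point map of the piecewise-linear circle automorphism -/
noncomputable def sigFun (a b : ℚ) (z : ℂ) : ℂ :=
  if z ∈ Q1 then cir (pl (a:ℝ) (b:ℝ) (ang z)) else z

lemma sigFun_of_mem {a b : ℚ} {z : ℂ} (hz : z ∈ Q1) :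
    sigFun a b z = cir (pl (a:ℝ) (b:ℝ) (ang z)) := if_pos hz

lemma sigFun_of_not_mem {a b : ℚ} {z : ℂ} (hz : z ∉ Q1) : sigFun a b z = z := if_neg hz

lemma sigFun_mem {a b : ℚ} {z : ℂ} (hz : z ∈ Q1) : sigFun a b z ∈ Q1 := by
  rw [sigFun_of_mem hz]
  obtain ⟨qz, hqz⟩ := ang_rat hz
  rw [← hqz]
  obtain ⟨r', hr'⟩ := pl_rat a b qz
  rw [hr']
  exact cir_rat_mem_Q1 r'

variable {a b : ℚ}

lemma sigFun_inv (ha0 : 0 < (a:ℝ)) (ha1 : (a:ℝ) < 1) (hb0 : 0 < (b:ℝ)) (hb1 : (b:ℝ) < 1) (z : ℂ) : sigFun b a (sigFun a b z) = z := by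
  by_cases hz : z ∈ Q1
  · have h1 := sigFun_mem (a := a) (b := b) hz
    rw [sigFun_of_mem hz] at h1 ⊢
    rw [sigFun_of_mem h1]
    have hmem : pl (a:ℝ) (b:ℝ) (ang z) ∈ Set.Ico (0:ℝ) 1 :=
      pl_mem_Ico ha0 ha1 hb0 hb1 (ang_mem z)
    rw [ang_cir, Int.fract_eq_self.2 ⟨hmem.1, hmem.2⟩, pl_inv ha0 ha1 hb0 hb1, cir_ang hz]
  · rw [sigFun_of_not_mem hz, sigFun_of_not_mem hz]

/-- piecewise-linear circle automorphism as a bijection of the plane -/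
noncomputable def sigEquiv (ha0 : 0 < (a:ℝ)) (ha1 : (a:ℝ) < 1) (hb0 : 0 < (b:ℝ)) (hb1 : (b:ℝ) < 1) : ℂ ≃ ℂ where
  toFun := sigFun a b
  invFun := sigFun b a
  left_inv := sigFun_inv ha0 ha1 hb0 hb1
  right_inv := sigFun_inv hb0 hb1 ha0 ha1

lemma sig_hf (ha0 : 0 < (a:ℝ)) (ha1 : (a:ℝ) < 1) (hb0 : 0 < (b:ℝ)) (hb1 : (b:ℝ) < 1) : ∀ z, z ∈ Q1 ↔ sigEquiv ha0 ha1 hb0 hb1 z ∈ Q1 := by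
  intro z
  by_cases hz : z ∈ Q1
  · exact ⟨fun _ => sigFun_mem hz, fun _ => hz⟩
  · have : sigEquiv ha0 ha1 hb0 hb1 z = z := sigFun_of_not_mem hz
    rw [this]

lemma sig_hseg (ha0 : 0 < (a:ℝ)) (ha1 : (a:ℝ) < 1) (hb0 : 0 < (b:ℝ)) (hb1 : (b:ℝ) < 1) : ∀ C D : ChordQ,
    (chordSegment (Sym2.map (sigEquiv ha0 ha1 hb0 hb1) C.1) ∩
      chordSegment (Sym2.map (sigEquiv ha0 ha1 hb0 hb1) D.1)).Nonempty ↔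
    (chordSegment C.1 ∩ chordSegment D.1).Nonempty := by
  rintro ⟨p, hpQ, hpD⟩ ⟨q, hqQ, hqD⟩
  induction p using Sym2.ind with
  | _ z1 z2 =>
  induction q using Sym2.ind with
  | _ w1 w2 =>
  simp only at hpQ hqQ hpD hqD ⊢
  have hz1Q : z1 ∈ Q1 := hpQ z1 (Sym2.mem_mk_left _ _)
  have hz2Q : z2 ∈ Q1 := hpQ z2 (Sym2.mem_mk_right _ _)
  have hw1Q : w1 ∈ Q1 := hqQ w1 (Sym2.mem_mk_left _ _)
  have hw2Q : w2 ∈ Q1 := hqQ w2 (Sym2.mem_mk_right _ _)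
  set x1 := ang z1 with hx1
  set x2 := ang z2 with hx2
  set y1 := ang w1 with hy1
  set y2 := ang w2 with hy2
  have hz1 : cir x1 = z1 := cir_ang hz1Q
  have hz2 : cir x2 = z2 := cir_ang hz2Q
  have hw1 : cir y1 = w1 := cir_ang hw1Q
  have hw2 : cir y2 = w2 := cir_ang hw2Q
  have hz12 : z1 ≠ z2 := fun h => hpD (Sym2.mk_isDiag_iff.2 h)
  have hw12 : w1 ≠ w2 := fun h => hqD (Sym2.mk_isDiag_iff.2 h)
  have hx12 : x1 ≠ x2 := fun h => hz12 (by rw [← hz1, ← hz2, h])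
  have hy12 : y1 ≠ y2 := fun h => hw12 (by rw [← hw1, ← hw2, h])
  have hmono := pl_mono ha0 ha1 hb0 hb1
  have e1 : sigEquiv ha0 ha1 hb0 hb1 z1 = cir (pl (a:ℝ) (b:ℝ) x1) := sigFun_of_mem hz1Q
  have e2 : sigEquiv ha0 ha1 hb0 hb1 z2 = cir (pl (a:ℝ) (b:ℝ) x2) := sigFun_of_mem hz2Q
  have e3 : sigEquiv ha0 ha1 hb0 hb1 w1 = cir (pl (a:ℝ) (b:ℝ) y1) := sigFun_of_mem hw1Q
  have e4 : sigEquiv ha0 ha1 hb0 hb1 w2 = cir (pl (a:ℝ) (b:ℝ) y2) := sigFun_of_mem hw2Q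
  rw [Sym2.map_pair_eq, Sym2.map_pair_eq, chordSegment_mk, chordSegment_mk,
    chordSegment_mk, chordSegment_mk, e1, e2, e3, e4, ← hz1, ← hz2, ← hw1, ← hw2]
  rw [star (pl_mem_Ico ha0 ha1 hb0 hb1 (ang_mem z1)) (pl_mem_Ico ha0 ha1 hb0 hb1 (ang_mem z2))
      (pl_mem_Ico ha0 ha1 hb0 hb1 (ang_mem w1)) (pl_mem_Ico ha0 ha1 hb0 hb1 (ang_mem w2))
      (fun h => hx12 (hmono.injective h)) (fun h => hy12 (hmono.injective h)),
    star (ang_mem z1) (ang_mem z2) (ang_mem w1) (ang_mem w2) hx12 hy12]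
  exact prod_sign_iff hmono x1 x2 y1 y2
end Sig

section Final

lemma rot_cir (c q : ℚ) : rotEquiv c (cir (q:ℝ)) = cir (((c + q : ℚ)) : ℝ) := by
  rw [rotEquiv_apply, ← cir_add]
  congr 1
  push_cast
  ring

lemma sig_cir {A B : ℚ} (hA0 : 0 < (A:ℝ)) (hA1 : (A:ℝ) < 1) (hB0 : 0 < (B:ℝ)) (hB1 : (B:ℝ) < 1)
    (c : ℚ) (hc0 : 0 ≤ (c:ℝ)) (hc1 : (c:ℝ) < 1) :
    sigEquiv hA0 hA1 hB0 hB1 (cir (c:ℝ)) = cir (pl (A:ℝ) (B:ℝ) (c:ℝ)) := by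
  show sigFun A B (cir (c:ℝ)) = _
  rw [sigFun_of_mem (cir_rat_mem_Q1 c), ang_cir, Int.fract_eq_self.2 ⟨hc0, hc1⟩]

lemma chord_repr (C : ChordQ) : ∃ x y : ℚ, 0 ≤ x ∧ x < y ∧ y < 1 ∧
    C.1 = s(cir ((x:ℚ):ℝ), cir ((y:ℚ):ℝ)) := by
  obtain ⟨p, hQ, hD⟩ := C
  induction p using Sym2.ind with
  | _ z1 z2 =>
  simp only at hQ hD ⊢
  have hz1Q : z1 ∈ Q1 := hQ z1 (Sym2.mem_mk_left _ _)
  have hz2Q : z2 ∈ Q1 := hQ z2 (Sym2.mem_mk_right _ _)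
  obtain ⟨q1, hq1⟩ := ang_rat hz1Q
  obtain ⟨q2, hq2⟩ := ang_rat hz2Q
  have hz1 : cir ((q1:ℚ):ℝ) = z1 := by rw [hq1]; exact cir_ang hz1Q
  have hz2 : cir ((q2:ℚ):ℝ) = z2 := by rw [hq2]; exact cir_ang hz2Q
  have hm1 : (q1:ℝ) ∈ Set.Ico (0:ℝ) 1 := hq1 ▸ ang_mem z1
  have hm2 : (q2:ℝ) ∈ Set.Ico (0:ℝ) 1 := hq2 ▸ ang_mem z2
  have hne : q1 ≠ q2 := by
    intro h
    apply hD
    rw [Sym2.mk_isDiag_iff, ← hz1, ← hz2, h]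
  have c01 : (0:ℚ) ≤ q1 := by exact_mod_cast hm1.1
  have c02 : (0:ℚ) ≤ q2 := by exact_mod_cast hm2.1
  have c11 : q1 < 1 := by exact_mod_cast hm1.2
  have c12 : q2 < 1 := by exact_mod_cast hm2.2
  rcases lt_or_gt_of_ne hne with h | h
  · exact ⟨q1, q2, c01, h, c12, by rw [hz1, hz2]⟩
  · exact ⟨q2, q1, c02, h, c11, by rw [hz1, hz2, Sym2.eq_swap]⟩

/-- The rational circle graph is vertex-transitive. -/
theorem rationalCircleGraph_vertexTransitive (u v : ChordQ) :
    ∃ h : RationalCircleGraph ≃g RationalCircleGraph, h u = v := by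
  obtain ⟨x, y, hx0, hxy, hy1, hu⟩ := chord_repr u
  obtain ⟨p, q, hp0, hpq, hq1, hv⟩ := chord_repr v
  set A : ℚ := y - x with hA
  set B : ℚ := q - p with hB
  have hA0 : 0 < (A:ℝ) := by simp only [hA]; push_cast; linarith [show (x:ℝ) < y by exact_mod_cast hxy]
  have hA1 : (A:ℝ) < 1 := by simp only [hA]; push_cast; linarith [show (0:ℝ) ≤ x by exact_mod_cast hx0, show (y:ℝ) < 1 by exact_mod_cast hy1]
  have hB0 : 0 < (B:ℝ) := by simp only [hB]; push_cast; linarith [show (p:ℝ) < q by exact_mod_cast hpq]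
  have hB1 : (B:ℝ) < 1 := by simp only [hB]; push_cast; linarith [show (0:ℝ) ≤ p by exact_mod_cast hp0, show (q:ℝ) < 1 by exact_mod_cast hq1]
  set G1 := graphIso (rotEquiv (-x)) (rot_hf (-x)) (rot_hseg (-x)) with hG1
  set G2 := graphIso (sigEquiv hA0 hA1 hB0 hB1) (sig_hf hA0 hA1 hB0 hB1)
    (sig_hseg hA0 hA1 hB0 hB1) with hG2
  set G3 := graphIso (rotEquiv p) (rot_hf p) (rot_hseg p) with hG3
  refine ⟨(G1.trans G2).trans G3, ?_⟩
  apply Subtype.ext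
  show (G3 (G2 (G1 u))).1 = v.1
  rw [graphIso_apply, graphIso_apply, graphIso_apply, hu, hv]
  rw [Sym2.map_pair_eq, rot_cir, rot_cir,
    show -x + x = 0 by ring, show -x + y = A by rw [hA]; ring]
  rw [Sym2.map_pair_eq,
    sig_cir hA0 hA1 hB0 hB1 0 (by norm_num) (by norm_num),
    sig_cir hA0 hA1 hB0 hB1 A hA0.le hA1,
    show pl (A:ℝ) (B:ℝ) ((0:ℚ):ℝ) = ((0:ℚ):ℝ) by push_cast; rw [pl_zero hA0],
    show pl (A:ℝ) (B:ℝ) ((A:ℚ):ℝ) = ((B:ℚ):ℝ) from pl_a hA0]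
  rw [Sym2.map_pair_eq, rot_cir, rot_cir,
    show p + 0 = p by ring, show p + B = q by rw [hB]; ring]
end Final

end
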